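/- For the sequence A with Sₙ = {1, 2, ..., n}, the density of exponentially A-numbers equals ∏_{n≥1} (1 − pₙ^{−(n+1)}), where pₙ is the n-th prime; in particular this product converges to a positive real number. -/

import Mathlib

def HasDensity (A : Set ℕ) (d : ℝ) : Prop :=
  Filter.Tendsto (fun N : ℕ => ({n : ℕ | n ∈ A ∧ n ≤ N}.ncard : ℝ) / N)
    Filter.atTop (nhds d)

/-- `nthPrime n` is the `n`-th prime, `1`-indexed: `nthPrime 1 = 2`. -/
noncomputable def nthPrime (n : ℕ) : ℕ := Nat.nth Nat.Prime (n - 1)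

namespace Stmt17

open Finset

open scoped Classical

noncomputable def q (m : ℕ) : ℕ := nthPrime m ^ (m + 1)

noncomputable def f (n : ℕ) : ℝ := 1 - ((q (n + 1) : ℝ))⁻¹

noncomputable def P (K : ℕ) : ℝ := ∏ n ∈ range K, f n

lemma nthPrime_prime (m : ℕ) : (nthPrime m).Prime := Nat.prime_nth_prime _

lemma two_le_nthPrime (m : ℕ) : 2 ≤ nthPrime m := (nthPrime_prime m).two_le

lemma q_pos (m : ℕ) : 0 < q m := pow_pos (nthPrime_prime m).pos _

lemma two_pow_le_q (m : ℕ) : 2 ^ (m + 1) ≤ q m :=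
  Nat.pow_le_pow_left (two_le_nthPrime m) _

lemma q_coprime {a b : ℕ} (ha : 1 ≤ a) (hab : a < b) : Nat.Coprime (q a) (q b) := by
  have h : nthPrime a ≠ nthPrime b := by
    have h' : nthPrime a < nthPrime b := by
      unfold nthPrime
      exact (Nat.nth_lt_nth Nat.infinite_setOf_prime).mpr (by omega)
    omega
  exact Nat.Coprime.pow _ _
    ((Nat.coprime_primes (nthPrime_prime a) (nthPrime_prime b)).mpr h)

lemma q_inv_le (m : ℕ) : ((q m : ℝ))⁻¹ ≤ (2 : ℝ)⁻¹ ^ (m + 1) := by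
  rw [inv_pow]
  have h1 : ((2 : ℝ)) ^ (m + 1) ≤ (q m : ℝ) := by
    have := two_pow_le_q m
    exact_mod_cast this
  gcongr

lemma q_inv_pos (m : ℕ) : 0 < ((q m : ℝ))⁻¹ := by
  have := q_pos m
  positivity

lemma q_inv_lt_half (m : ℕ) : ((q m : ℝ))⁻¹ ≤ 2⁻¹ := by
  calc ((q m : ℝ))⁻¹ ≤ (2 : ℝ)⁻¹ ^ (m + 1) := q_inv_le m
    _ ≤ (2 : ℝ)⁻¹ ^ 1 := by
        apply pow_le_pow_of_le_one (by norm_num) (by norm_num) (by omega)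
    _ = 2⁻¹ := pow_one _

lemma f_pos (n : ℕ) : 0 < f n := by
  have := q_inv_lt_half (n + 1)
  unfold f; linarith

lemma half_le_f (n : ℕ) : 2⁻¹ ≤ f n := by
  have := q_inv_lt_half (n + 1)
  unfold f; linarith

lemma f_le_one (n : ℕ) : f n ≤ 1 := by
  have := q_inv_pos (n + 1)
  unfold f; linarith

lemma P_nonneg (K : ℕ) : 0 ≤ P K :=
  Finset.prod_nonneg fun n _ => (f_pos n).le

lemma P_le_one (K : ℕ) : P K ≤ 1 :=
  Finset.prod_le_one (fun n _ => (f_pos n).le) (fun n _ => f_le_one n)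

lemma log_bound (n : ℕ) : ‖Real.log (f n)‖ ≤ (2 : ℝ)⁻¹ ^ (n + 1) := by
  have hfpos := f_pos n
  have hf1 := f_le_one n
  have hhalf := half_le_f n
  have hlog : Real.log (f n) ≤ 0 := Real.log_nonpos hfpos.le hf1
  rw [Real.norm_eq_abs, abs_of_nonpos hlog, ← Real.log_inv]
  have h2 : Real.log (f n)⁻¹ ≤ (f n)⁻¹ - 1 :=
    Real.log_le_sub_one_of_pos (by positivity)
  have hinv : (f n)⁻¹ ≤ 2 := by
    rw [inv_le_comm₀ hfpos (by norm_num)]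
    simpa using hhalf
  have hq := q_inv_le (n + 1)
  have key : (f n)⁻¹ - 1 ≤ (2 : ℝ)⁻¹ ^ (n + 1) := by
    have h3 : (f n)⁻¹ - 1 = (1 - f n) * (f n)⁻¹ := by
      field_simp
    rw [h3]
    have h4 : 1 - f n = ((q (n + 1) : ℝ))⁻¹ := by unfold f; ring
    rw [h4]
    calc ((q (n + 1) : ℝ))⁻¹ * (f n)⁻¹ ≤ (2 : ℝ)⁻¹ ^ (n + 2) * 2 := by
          apply mul_le_mul hq hinv (by positivity) (by positivity)
      _ = (2 : ℝ)⁻¹ ^ (n + 1) := by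
          rw [pow_succ]
          ring
  linarith

lemma summable_log : Summable fun n => Real.log (f n) := by
  apply Summable.of_norm_bounded ?_ log_bound
  have h : Summable fun n : ℕ => (2 : ℝ)⁻¹ * (2 : ℝ)⁻¹ ^ n :=
    (summable_geometric_of_lt_one (by norm_num) (by norm_num)).mul_left _
  exact h.congr fun n => by rw [← pow_succ']

lemma multipliable_f : Multipliable f :=
  Real.multipliable_of_summable_log (fun n => f_pos n) summable_log

lemma tprod_pos : 0 < ∏' n, f n := by
  have h := Real.rexp_tsum_eq_tprod (f := f) (fun n => f_pos n) summable_log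
  rw [← h]
  exact Real.exp_pos _

noncomputable def Aset (x : ℕ) : Finset ℕ :=
  (Icc 1 x).filter fun N => ∀ m, 1 ≤ m → ¬ q m ∣ N

noncomputable def Cset (K x : ℕ) : Finset ℕ :=
  (Icc 1 x).filter fun N => ∀ m ∈ Icc 1 K, ¬ q m ∣ N

lemma Cset_zero (x : ℕ) : (Cset 0 x).card = x := by
  have h : Cset 0 x = Icc 1 x := by
    ext N
    simp only [Cset, mem_filter, mem_Icc]
    constructor
    · rintro ⟨h1, _⟩; exact h1
    · intro h1
      refine ⟨h1, fun m hm => ?_⟩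
      omega
  rw [h, Nat.card_Icc]
  omega

lemma Cset_rec (K x : ℕ) :
    (Cset (K + 1) x).card + (Cset K (x / q (K + 1))).card = (Cset K x).card := by
  have h1 : Cset (K + 1) x = (Cset K x).filter fun N => ¬ q (K + 1) ∣ N := by
    ext N
    simp only [Cset, mem_filter, mem_Icc]
    constructor
    · rintro ⟨hI, h⟩
      exact ⟨⟨hI, fun m hm => h m ⟨hm.1, by omega⟩⟩, h (K + 1) ⟨by omega, le_rfl⟩⟩
    · rintro ⟨⟨hI, h⟩, hK⟩
      refine ⟨hI, fun m hm => ?_⟩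
      rcases Nat.lt_or_ge m (K + 1) with h' | h'
      · exact h m ⟨hm.1, by omega⟩
      · have hEq : m = K + 1 := by omega
        rwa [hEq]
  have h2 : ((Cset K x).filter fun N => q (K + 1) ∣ N).card
      = (Cset K (x / q (K + 1))).card := by
    set Q := q (K + 1) with hQ
    have hQpos : 0 < Q := q_pos _
    apply Finset.card_bij (fun N _ => N / Q)
    · intro N hN
      simp only [Cset, mem_filter, mem_Icc] at hN ⊢
      obtain ⟨⟨⟨hN1, hNx⟩, hNd⟩, hdvd⟩ := hN
      refine ⟨⟨?_, Nat.div_le_div_right hNx⟩, ?_⟩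
      · exact (Nat.one_le_div_iff hQpos).mpr (Nat.le_of_dvd (by omega) hdvd)
      · intro m hm hmd
        exact hNd m hm (hmd.trans (Nat.div_dvd_of_dvd hdvd))
    · intro N1 h1' N2 h2' heq
      simp only [Cset, mem_filter, mem_Icc] at h1' h2'
      have e1 : Q * (N1 / Q) = N1 := Nat.mul_div_cancel' h1'.2
      have e2 : Q * (N2 / Q) = N2 := Nat.mul_div_cancel' h2'.2
      rw [← e1, ← e2, heq]
    · intro M hM
      simp only [Cset, mem_filter, mem_Icc] at hM
      obtain ⟨⟨hM1, hMx⟩, hMd⟩ := hM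
      refine ⟨Q * M, ?_, ?_⟩
      · simp only [Cset, mem_filter, mem_Icc]
        have hQM : 0 < Q * M := Nat.mul_pos hQpos (by omega)
        refine ⟨⟨⟨by omega, ?_⟩, ?_⟩, Dvd.intro M rfl⟩
        · calc Q * M = M * Q := mul_comm _ _
            _ ≤ x := (Nat.le_div_iff_mul_le hQpos).mp hMx
        · intro m hm hmd
          apply hMd m hm
          have hc : Nat.Coprime (q m) Q := by
            rw [hQ]
            exact q_coprime hm.1 (by omega)
          exact (Nat.Coprime.dvd_of_dvd_mul_left hc hmd)
      · exact Nat.mul_div_cancel_left M hQpos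
  rw [h1]
  rw [← h2]
  rw [add_comm]
  exact Finset.card_filter_add_card_filter_not _

lemma Cset_bound (K : ℕ) : ∀ x : ℕ, |((Cset K x).card : ℝ) - x * P K| ≤ 2 ^ K - 1 := by
  induction K with
  | zero =>
    intro x
    simp [Cset_zero, P]
  | succ K ih =>
    intro x
    set Q := q (K + 1) with hQ
    set y := x / Q with hy
    have hQpos : 0 < Q := q_pos _
    have hrec := Cset_rec K x
    have h1 := ih x
    have h2 := ih y
    have hcast : ((Cset (K + 1) x).card : ℝ) = ((Cset K x).card : ℝ) - ((Cset K y).card : ℝ) := by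
      have h' : ((Cset (K + 1) x).card : ℝ) + ((Cset K y).card : ℝ) = ((Cset K x).card : ℝ) := by
        exact_mod_cast congrArg (Nat.cast (R := ℝ)) hrec
      linarith
    have hy1 : (y : ℝ) ≤ (x : ℝ) / Q := Nat.cast_div_le
    have hy2 : (x : ℝ) / Q ≤ (y : ℝ) + 1 := by
      have hlt : x < (y + 1) * Q := by
        have := Nat.lt_mul_div_succ x hQpos
        calc x < Q * (x / Q + 1) := this
          _ = (y + 1) * Q := by rw [hy]; ring
      rw [div_le_iff₀ (by exact_mod_cast hQpos)]
      calc (x : ℝ) ≤ ((y + 1) * Q : ℕ) := by exact_mod_cast hlt.le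
        _ = ((y : ℝ) + 1) * Q := by push_cast; ring
    have hPsucc : P (K + 1) = P K * (1 - ((Q : ℝ))⁻¹) := by
      rw [P, prod_range_succ]
      rfl
    have hP0 := P_nonneg K
    have hP1 := P_le_one K
    have hDnn : (0 : ℝ) ≤ (x : ℝ) / Q - y := by linarith
    have hD1 : (x : ℝ) / Q - y ≤ 1 := by linarith
    have hPD1 : P K * ((x : ℝ) / Q - y) ≤ 1 := by
      calc P K * ((x : ℝ) / Q - y) ≤ 1 * 1 := by
            apply mul_le_mul hP1 hD1 hDnn (by norm_num)
        _ = 1 := by ring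
    have hPD0 : 0 ≤ P K * ((x : ℝ) / Q - y) := mul_nonneg hP0 hDnn
    have key : ((Cset (K + 1) x).card : ℝ) - x * P (K + 1)
        = (((Cset K x).card : ℝ) - x * P K) - (((Cset K y).card : ℝ) - y * P K)
          + P K * ((x : ℝ) / Q - y) := by
      rw [hcast, hPsucc]
      field_simp
      ring
    rw [key, abs_le] at *
    constructor
    · have : (2 : ℝ) ^ (K + 1) = 2 * 2 ^ K := by ring
      rw [this]
      obtain ⟨a1, b1⟩ := h1
      obtain ⟨a2, b2⟩ := h2
      linarith
    · have : (2 : ℝ) ^ (K + 1) = 2 * 2 ^ K := by ring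
      rw [this]
      obtain ⟨a1, b1⟩ := h1
      obtain ⟨a2, b2⟩ := h2
      linarith

lemma Aset_subset (K x : ℕ) : Aset x ⊆ Cset K x := by
  intro N hN
  simp only [Aset, Cset, mem_filter] at hN ⊢
  exact ⟨hN.1, fun m hm => hN.2 m (mem_Icc.mp hm).1⟩

lemma Cset_sub_bound (K x : ℕ) :
    (Cset K x).card ≤ (Aset x).card + ∑ m ∈ Ico (K + 1) (x + 1), x / q m := by
  have hsub : Cset K x ⊆ Aset x ∪ (Ico (K + 1) (x + 1)).biUnion
      (fun m => (Icc 1 x).filter fun N => q m ∣ N) := by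
    intro N hN
    simp only [Cset, mem_filter, mem_Icc] at hN
    obtain ⟨⟨hN1, hNx⟩, hNd⟩ := hN
    by_cases hA : ∀ m, 1 ≤ m → ¬ q m ∣ N
    · apply mem_union_left
      simp only [Aset, mem_filter, mem_Icc]
      exact ⟨⟨hN1, hNx⟩, hA⟩
    · apply mem_union_right
      push_neg at hA
      obtain ⟨m, hm1, hmd⟩ := hA
      have hmK : K + 1 ≤ m := by
        by_contra hc
        exact hNd m ⟨hm1, by omega⟩ hmd
      have hqN : q m ≤ N := Nat.le_of_dvd (by omega) hmd
      have hmq : m < q m := by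
        calc m < 2 ^ m := Nat.lt_two_pow_self
          _ ≤ 2 ^ (m + 1) := Nat.pow_le_pow_right (by norm_num) (by omega)
          _ ≤ q m := two_pow_le_q m
      rw [mem_biUnion]
      refine ⟨m, mem_Ico.mpr ⟨hmK, by omega⟩, ?_⟩
      simp only [mem_filter, mem_Icc]
      exact ⟨⟨hN1, hNx⟩, hmd⟩
  calc (Cset K x).card ≤ (Aset x ∪ _).card := Finset.card_le_card hsub
    _ ≤ (Aset x).card + ((Ico (K + 1) (x + 1)).biUnion
          (fun m => (Icc 1 x).filter fun N => q m ∣ N)).card := Finset.card_union_le _ _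
    _ ≤ (Aset x).card + ∑ m ∈ Ico (K + 1) (x + 1), x / q m := by
        apply Nat.add_le_add_left
        refine (Finset.card_biUnion_le).trans ?_
        apply Finset.sum_le_sum
        intro m _
        have : Icc 1 x = Ioc 0 x := rfl
        rw [this]
        rw [Nat.Ioc_filter_dvd_card_eq_div]

lemma geo_eq (a k : ℕ) :
    ∑ m ∈ Ico a (a + k), (2 : ℝ)⁻¹ ^ (m + 1) = (2 : ℝ)⁻¹ ^ a - (2 : ℝ)⁻¹ ^ (a + k) := by
  induction k with
  | zero => simp
  | succ k ih =>
    have h : a + (k + 1) = (a + k) + 1 := by omega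
    rw [h, Finset.sum_Ico_succ_top (by omega), ih, pow_succ]
    ring

lemma geo (a b : ℕ) : ∑ m ∈ Ico a b, (2 : ℝ)⁻¹ ^ (m + 1) ≤ (2 : ℝ)⁻¹ ^ a := by
  rcases Nat.lt_or_ge b a with h | h
  · rw [Finset.Ico_eq_empty (by omega)]
    simp only [sum_empty]
    positivity
  · obtain ⟨k, rfl⟩ := Nat.exists_eq_add_of_le h
    rw [geo_eq]
    have : (0 : ℝ) < (2 : ℝ)⁻¹ ^ (a + k) := by positivity
    linarith

lemma tail_bound (K x : ℕ) :
    ((∑ m ∈ Ico (K + 1) (x + 1), x / q m : ℕ) : ℝ) ≤ x * (2 : ℝ)⁻¹ ^ (K + 1) := by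
  push_cast
  calc ∑ m ∈ Ico (K + 1) (x + 1), ((x / q m : ℕ) : ℝ)
      ≤ ∑ m ∈ Ico (K + 1) (x + 1), (x : ℝ) * (2 : ℝ)⁻¹ ^ (m + 1) := by
        apply Finset.sum_le_sum
        intro m _
        calc ((x / q m : ℕ) : ℝ) ≤ (x : ℝ) / (q m : ℝ) := Nat.cast_div_le
          _ = (x : ℝ) * ((q m : ℝ))⁻¹ := div_eq_mul_inv _ _
          _ ≤ (x : ℝ) * (2 : ℝ)⁻¹ ^ (m + 1) := by
              apply mul_le_mul_of_nonneg_left (q_inv_le m) (by positivity)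
    _ = (x : ℝ) * ∑ m ∈ Ico (K + 1) (x + 1), (2 : ℝ)⁻¹ ^ (m + 1) := by
        rw [Finset.mul_sum]
    _ ≤ (x : ℝ) * (2 : ℝ)⁻¹ ^ (K + 1) := by
        apply mul_le_mul_of_nonneg_left (geo _ _) (by positivity)

lemma main_bound (K x : ℕ) (hx : 1 ≤ x) :
    |((Aset x).card : ℝ) / x - P K| ≤ (2 : ℝ) ^ K / x + (2 : ℝ)⁻¹ ^ (K + 1) := by
  have hxpos : (0 : ℝ) < x := by exact_mod_cast hx
  have hupper : ((Aset x).card : ℝ) ≤ ((Cset K x).card : ℝ) := by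
    exact_mod_cast Finset.card_le_card (Aset_subset K x)
  have hlower : ((Cset K x).card : ℝ) ≤ ((Aset x).card : ℝ) + x * (2 : ℝ)⁻¹ ^ (K + 1) := by
    have h1 : ((Cset K x).card : ℝ)
        ≤ ((Aset x).card : ℝ) + ((∑ m ∈ Ico (K + 1) (x + 1), x / q m : ℕ) : ℝ) := by
      exact_mod_cast Cset_sub_bound K x
    linarith [tail_bound K x]
  have hC := Cset_bound K x
  have ht : (0 : ℝ) ≤ x * (2 : ℝ)⁻¹ ^ (K + 1) := by positivity
  have key : |((Aset x).card : ℝ) - x * P K| ≤ (2 ^ K - 1) + x * (2 : ℝ)⁻¹ ^ (K + 1) := by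
    rw [abs_le] at hC ⊢
    constructor <;> linarith [hC.1, hC.2]
  have hrw : ((Aset x).card : ℝ) / x - P K = (((Aset x).card : ℝ) - x * P K) / x := by
    field_simp
  rw [hrw, abs_div, abs_of_pos hxpos]
  calc |((Aset x).card : ℝ) - x * P K| / x
      ≤ ((2 ^ K - 1) + x * (2 : ℝ)⁻¹ ^ (K + 1)) / x := by
        gcongr
    _ ≤ (2 : ℝ) ^ K / x + (2 : ℝ)⁻¹ ^ (K + 1) := by
        rw [div_le_iff₀ hxpos, add_mul, div_mul_cancel₀ _ hxpos.ne']
        have : (0:ℝ) ≤ (2 : ℝ)⁻¹ ^ (K + 1) := by positivity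
        nlinarith

lemma f_eq (n : ℕ) : f n = 1 - (nthPrime (n + 1) : ℝ)⁻¹ ^ (n + 2) := by
  unfold f q
  rw [Nat.cast_pow, inv_pow]

lemma cond_iff {N : ℕ} (hN : 0 < N) :
    (∀ n : ℕ, 1 ≤ n → nthPrime n ∣ N → N.factorization (nthPrime n) ≤ n) ↔
      ∀ m, 1 ≤ m → ¬ q m ∣ N := by
  constructor
  · intro h m hm hdvd
    have hp := nthPrime_prime m
    simp only [q] at hdvd
    have h1 : nthPrime m ∣ N := dvd_trans (dvd_pow_self _ (Nat.succ_ne_zero m)) hdvd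
    have h2 : m + 1 ≤ N.factorization (nthPrime m) :=
      (Nat.Prime.pow_dvd_iff_le_factorization hp hN.ne').mp hdvd
    have := h m hm h1
    omega
  · intro h n hn _
    by_contra hc
    apply h n hn
    simp only [q]
    exact ((nthPrime_prime n).pow_dvd_iff_le_factorization hN.ne').mpr (by omega)

lemma ncard_eq (x : ℕ) :
    ({n : ℕ | n ∈ {N : ℕ | 0 < N ∧ ∀ n : ℕ, 1 ≤ n → nthPrime n ∣ N →
        N.factorization (nthPrime n) ≤ n} ∧ n ≤ x}.ncard : ℝ) = ((Aset x).card : ℝ) := by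
  have hset : {n : ℕ | n ∈ {N : ℕ | 0 < N ∧ ∀ n : ℕ, 1 ≤ n → nthPrime n ∣ N →
      N.factorization (nthPrime n) ≤ n} ∧ n ≤ x} = ↑(Aset x) := by
    ext N
    simp only [Set.mem_setOf_eq, Aset, coe_filter, mem_Icc]
    constructor
    · rintro ⟨⟨hpos, h⟩, hle⟩
      exact ⟨⟨hpos, hle⟩, (cond_iff hpos).mp h⟩
    · rintro ⟨⟨h1, h2⟩, h⟩
      exact ⟨⟨h1, (cond_iff h1).mpr h⟩, h2⟩
  rw [hset, Set.ncard_coe_finset]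

end Stmt17

theorem stmt_17 :
    HasDensity
      {N : ℕ | 0 < N ∧ ∀ n : ℕ, 1 ≤ n → nthPrime n ∣ N →
        N.factorization (nthPrime n) ≤ n}
      (∏' n : ℕ, (1 - (nthPrime (n + 1) : ℝ)⁻¹ ^ (n + 2))) ∧
    0 < ∏' n : ℕ, (1 - (nthPrime (n + 1) : ℝ)⁻¹ ^ (n + 2)) := by
  have hprod_eq : (∏' n : ℕ, (1 - (nthPrime (n + 1) : ℝ)⁻¹ ^ (n + 2))) = ∏' n, Stmt17.f n :=
    tprod_congr fun n => (Stmt17.f_eq n).symm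
  constructor
  · rw [hprod_eq]
    unfold HasDensity
    set T := ∏' n, Stmt17.f n with hT
    have hPtend : Filter.Tendsto Stmt17.P Filter.atTop (nhds T) :=
      Stmt17.multipliable_f.hasProd.tendsto_prod_nat
    rw [Metric.tendsto_atTop]
    intro ε hε
    obtain ⟨K1, hK1⟩ := Metric.tendsto_atTop.mp hPtend (ε / 3) (by linarith)
    obtain ⟨K2, hK2⟩ := exists_pow_lt_of_lt_one (show (0 : ℝ) < ε / 3 by linarith)
      (show (2 : ℝ)⁻¹ < 1 by norm_num)
    set K := max K1 K2 with hK
    have hPK : |Stmt17.P K - T| < ε / 3 := by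
      have := hK1 K (le_max_left _ _)
      rwa [Real.dist_eq] at this
    have hgeo : (2 : ℝ)⁻¹ ^ (K + 1) < ε / 3 := by
      calc (2 : ℝ)⁻¹ ^ (K + 1) ≤ (2 : ℝ)⁻¹ ^ K2 := by
            apply pow_le_pow_of_le_one (by norm_num) (by norm_num)
            have := le_max_right K1 K2
            omega
        _ < ε / 3 := hK2
    obtain ⟨X, hX⟩ := exists_nat_gt (3 * 2 ^ K / ε)
    refine ⟨max X 1, fun x hx => ?_⟩
    have hx1 : 1 ≤ x := le_trans (le_max_right X 1) hx
    have hxX : (X : ℝ) ≤ (x : ℝ) := by exact_mod_cast le_trans (le_max_left X 1) hx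
    have hxpos : (0 : ℝ) < x := by exact_mod_cast hx1
    have hdivlt : (2 : ℝ) ^ K / x < ε / 3 := by
      rw [div_lt_iff₀ hxpos]
      have h1 : 3 * 2 ^ K / ε < (x : ℝ) := lt_of_lt_of_le hX hxX
      rw [div_lt_iff₀ hε] at h1
      linarith
    have hmb := Stmt17.main_bound K x hx1
    rw [Real.dist_eq, Stmt17.ncard_eq]
    have htri : |((Stmt17.Aset x).card : ℝ) / x - T|
        ≤ |((Stmt17.Aset x).card : ℝ) / x - Stmt17.P K| + |Stmt17.P K - T| :=
      abs_sub_le _ _ _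
    linarith
  · rw [hprod_eq]
    exact Stmt17.tprod_pos
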